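/- Let μ be a generalized Riesz product based on polynomials (P_k), and suppose ℕ is partitioned into k subsequences 𝒩_1,...,𝒩_k with associated generalized Riesz products μ_1,...,μ_k satisfying √(dμ/dz) = Π_{i=1}^k √(dμ_i/dz) a.e., and (∫√(dμ_i/dz) dz)^2 ≤ ∫|P_{j_i}| dz where j_i is the least element of 𝒩_i. Then ∫ (dμ/dz)^{1/(2k)} dz ≤ Π_{i=1}^k (∫|P_{j_i}| dz)^{1/(2k)}. -/

import Mathlib

open MeasureTheory Filter Topology Real

/-- Suppose the derivative of a generalized Riesz product `μ` (a finite
measure on the circle) factors a.e. as `√(dμ/dz) = Π_{i=1}^k √(dμ_i/dz)` for finite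
measures `μ_1, …, μ_k`, and `(∫ √(dμ_i/dz) dz)² ≤ b_i` where `b_i = ∫ |P_{j_i}| dz ≥ 0`.
Then `∫ (dμ/dz)^{1/(2k)} dz ≤ Π_{i=1}^k b_i^{1/(2k)}`. -/
theorem holder_riesz_partition
    {k : ℕ} (hk : 1 ≤ k)
    (μ : Measure (AddCircle (1:ℝ))) (μi : Fin k → Measure (AddCircle (1:ℝ)))
    [IsFiniteMeasure μ] [∀ i, IsFiniteMeasure (μi i)]
    (b : Fin k → ℝ) (hb : ∀ i, 0 ≤ b i)
    (hfactor : ∀ᵐ z,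
      Real.sqrt ((μ.rnDeriv volume z).toReal)
        = ∏ i : Fin k, Real.sqrt (((μi i).rnDeriv volume z).toReal))
    (hbound : ∀ i : Fin k,
      (∫ z, Real.sqrt (((μi i).rnDeriv volume z).toReal)) ^ 2 ≤ b i) :
    (∫ z, ((μ.rnDeriv volume z).toReal) ^ ((1:ℝ) / (2 * k)))
      ≤ ∏ i : Fin k, (b i) ^ ((1:ℝ) / (2 * k)) := by
  classical
  have hk0 : (0:ℝ) < k := by exact_mod_cast hk
  set c : ℝ := 1 / (2 * k) with hc
  have hcpos : 0 < c := by positivity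
  set F := μ.rnDeriv volume with hF
  set g : Fin k → AddCircle (1:ℝ) → ENNReal := fun i => (μi i).rnDeriv volume with hg
  have hFmeas : Measurable F := μ.measurable_rnDeriv volume
  have hgmeas : ∀ i, Measurable (g i) := fun i => (μi i).measurable_rnDeriv volume
  have hFfin : ∀ᵐ z, F z < ⊤ := μ.rnDeriv_lt_top volume
  have hgfin : ∀ᵐ z, ∀ i, g i z < ⊤ := ae_all_iff.2 fun i => (μi i).rnDeriv_lt_top volume
  -- finiteness of the half-power lintegrals
  have hhalf_fin : ∀ i, (∫⁻ z, g i z ^ ((1:ℝ)/2)) < ⊤ := by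
    intro i
    have hle : ∀ z, g i z ^ ((1:ℝ)/2) ≤ 1 + g i z := by
      intro z
      rcases le_total (g i z) 1 with h | h
      · exact le_trans (ENNReal.rpow_le_one h (by norm_num)) le_self_add
      · calc g i z ^ ((1:ℝ)/2) ≤ g i z ^ (1:ℝ) :=
              ENNReal.rpow_le_rpow_of_exponent_le h (by norm_num)
          _ = g i z := ENNReal.rpow_one _
          _ ≤ 1 + g i z := le_add_self
    calc ∫⁻ z, g i z ^ ((1:ℝ)/2) ≤ ∫⁻ z, (1 + g i z) := lintegral_mono hle
      _ = volume Set.univ + ∫⁻ z, g i z := by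
          rw [lintegral_add_left measurable_const, lintegral_one]
      _ ≤ volume Set.univ + (μi i) Set.univ := by
          gcongr; exact Measure.lintegral_rnDeriv_le
      _ < ⊤ := by
          haveI : Fact ((0:ℝ) < 1) := ⟨one_pos⟩
          exact ENNReal.add_lt_top.2 ⟨measure_lt_top _ _, measure_lt_top _ _⟩
  -- relate real integral of sqrt to lintegral
  have hsqrt_eq : ∀ i, (∫ z, Real.sqrt ((g i z).toReal))
      = (∫⁻ z, g i z ^ ((1:ℝ)/2)).toReal := by
    intro i
    rw [integral_eq_lintegral_of_nonneg_ae
      (Filter.Eventually.of_forall fun z => Real.sqrt_nonneg _)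
      ((hgmeas i).ennreal_toReal.sqrt.aestronglyMeasurable)]
    congr 1
    refine lintegral_congr_ae ?_
    filter_upwards [hgfin] with z hz
    rw [Real.sqrt_eq_rpow, ENNReal.toReal_rpow, ENNReal.ofReal_toReal]
    exact (ENNReal.rpow_lt_top_of_nonneg (by norm_num) (hz i).ne).ne
  -- bound each half-power lintegral
  have h3 : ∀ i, (∫⁻ z, g i z ^ ((1:ℝ)/2)) ≤ ENNReal.ofReal (Real.sqrt (b i)) := by
    intro i
    have h1 : (∫⁻ z, g i z ^ ((1:ℝ)/2)).toReal ≤ Real.sqrt (b i) := by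
      rw [← hsqrt_eq i]
      have hnonneg : 0 ≤ ∫ z, Real.sqrt ((g i z).toReal) :=
        integral_nonneg fun z => Real.sqrt_nonneg _
      exact (Real.le_sqrt hnonneg (hb i)).2 (hbound i)
    calc (∫⁻ z, g i z ^ ((1:ℝ)/2))
        = ENNReal.ofReal ((∫⁻ z, g i z ^ ((1:ℝ)/2)).toReal) :=
          (ENNReal.ofReal_toReal (hhalf_fin i).ne).symm
      _ ≤ ENNReal.ofReal (Real.sqrt (b i)) := ENNReal.ofReal_le_ofReal h1
  -- step 1 : LHS as lintegral
  have h1 : (∫ z, (F z).toReal ^ c) = (∫⁻ z, F z ^ c).toReal := by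
    rw [integral_eq_lintegral_of_nonneg_ae
      (Filter.Eventually.of_forall fun z => Real.rpow_nonneg ENNReal.toReal_nonneg _)
      ((hFmeas.ennreal_toReal.pow_const c).aestronglyMeasurable)]
    congr 1
    refine lintegral_congr_ae ?_
    filter_upwards [hFfin] with z hz
    rw [ENNReal.toReal_rpow, ENNReal.ofReal_toReal]
    exact (ENNReal.rpow_lt_top_of_nonneg hcpos.le hz.ne).ne
  -- step 2 : Hölder
  have h2 : (∫⁻ z, F z ^ c) ≤ ∏ i : Fin k, (∫⁻ z, g i z ^ ((1:ℝ)/2)) ^ ((1:ℝ)/k) := by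
    have heq : ∫⁻ z, F z ^ c = ∫⁻ z, ∏ i : Fin k, (g i z ^ ((1:ℝ)/2)) ^ ((1:ℝ)/k) := by
      refine lintegral_congr_ae ?_
      filter_upwards [hfactor, hFfin, hgfin] with z hz hF' hg'
      have hprod : ∏ i : Fin k, (g i z ^ ((1:ℝ)/2)) ^ ((1:ℝ)/k)
          = ∏ i : Fin k, g i z ^ c := by
        refine Finset.prod_congr rfl fun i _ => ?_
        rw [← ENNReal.rpow_mul]
        congr 1
        field_simp [hc]
        rw [hc, mul_one_div_cancel (by positivity)]
      rw [hprod]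
      -- now show F z ^ c = ∏ g i z ^ c
      have hFc : F z ^ c = ENNReal.ofReal ((F z).toReal ^ c) := by
        rw [ENNReal.toReal_rpow, ENNReal.ofReal_toReal
          (ENNReal.rpow_lt_top_of_nonneg hcpos.le hF'.ne).ne]
      have hgc : ∀ i, g i z ^ c = ENNReal.ofReal ((g i z).toReal ^ c) := by
        intro i
        rw [ENNReal.toReal_rpow, ENNReal.ofReal_toReal
          (ENNReal.rpow_lt_top_of_nonneg hcpos.le (hg' i).ne).ne]
      rw [hFc]
      have hreal : (F z).toReal ^ c = ∏ i : Fin k, (g i z).toReal ^ c := by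
        have h2c : (1:ℝ)/2 * (2 * c) = c := by
          field_simp [hc]
        calc (F z).toReal ^ c = ((F z).toReal ^ ((1:ℝ)/2)) ^ (2 * c) := by
              rw [← Real.rpow_mul ENNReal.toReal_nonneg, h2c]
          _ = (Real.sqrt ((F z).toReal)) ^ (2 * c) := by rw [Real.sqrt_eq_rpow]
          _ = (∏ i : Fin k, Real.sqrt ((g i z).toReal)) ^ (2 * c) := by rw [hz]
          _ = ∏ i : Fin k, (Real.sqrt ((g i z).toReal)) ^ (2 * c) := by
              rw [← Real.finset_prod_rpow _ _ (fun i _ => Real.sqrt_nonneg _)]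
          _ = ∏ i : Fin k, (g i z).toReal ^ c := by
              refine Finset.prod_congr rfl fun i _ => ?_
              rw [Real.sqrt_eq_rpow, ← Real.rpow_mul ENNReal.toReal_nonneg, h2c]
      rw [hreal, ENNReal.ofReal_prod_of_nonneg
        (fun i _ => Real.rpow_nonneg ENNReal.toReal_nonneg _)]
      exact Finset.prod_congr rfl fun i _ => (hgc i).symm
    rw [heq]
    refine ENNReal.lintegral_prod_norm_pow_le _
      (fun i _ => ((hgmeas i).pow_const _).aemeasurable) ?_ (fun i _ => by positivity)
    simp [Finset.sum_const, Finset.card_univ]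
    field_simp
  -- step 3 : combine
  rw [show (fun z => ((μ.rnDeriv volume z).toReal) ^ ((1:ℝ) / (2 * k)))
      = fun z => (F z).toReal ^ c from rfl] at *
  rw [h1]
  have hRHS : ∏ i : Fin k, (∫⁻ z, g i z ^ ((1:ℝ)/2)) ^ ((1:ℝ)/k)
      ≤ ENNReal.ofReal (∏ i : Fin k, (b i) ^ c) := by
    rw [ENNReal.ofReal_prod_of_nonneg (fun i _ => Real.rpow_nonneg (hb i) _)]
    refine Finset.prod_le_prod' fun i _ => ?_
    calc (∫⁻ z, g i z ^ ((1:ℝ)/2)) ^ ((1:ℝ)/k)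
        ≤ (ENNReal.ofReal (Real.sqrt (b i))) ^ ((1:ℝ)/k) := by
          gcongr
          exact h3 i
      _ = ENNReal.ofReal (Real.sqrt (b i) ^ ((1:ℝ)/k)) :=
          ENNReal.ofReal_rpow_of_nonneg (Real.sqrt_nonneg _) (by positivity)
      _ = ENNReal.ofReal ((b i) ^ c) := by
          rw [Real.sqrt_eq_rpow, ← Real.rpow_mul (hb i)]
          congr 1
          field_simp [hc]
          rw [hc]
  have := le_trans h2 hRHS
  calc (∫⁻ z, F z ^ c).toReal ≤ (ENNReal.ofReal (∏ i : Fin k, (b i) ^ c)).toReal := by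
        exact ENNReal.toReal_mono ENNReal.ofReal_ne_top this
    _ = ∏ i : Fin k, (b i) ^ c :=
        ENNReal.toReal_ofReal (Finset.prod_nonneg fun i _ => Real.rpow_nonneg (hb i) _)
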